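/- Let Γ be a finite cubic graph containing a bridge (an edge whose removal disconnects the graph). Then Γ admits no proper 3-edge-coloring. -/

import Mathlib

open Finset

/-- A finset admitting a fixed-point-free involution has even cardinality. -/
lemma even_card_of_involution {α : Type*} [DecidableEq α] (s : Finset α) (g : α → α)
    (hmem : ∀ v ∈ s, g v ∈ s) (hinv : ∀ v ∈ s, g (g v) = v) (hne : ∀ v ∈ s, g v ≠ v) :
    Even s.card := by
  induction s using Finset.strongInduction with
  | _ s ih =>
    rcases s.eq_empty_or_nonempty with rfl | ⟨v, hv⟩
    · simp
    · have hgv : g v ∈ s := hmem v hv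
      set t := (s.erase v).erase (g v) with ht
      have htsub : t ⊂ s :=
        Finset.ssubset_of_subset_of_ssubset (Finset.erase_subset _ _) (Finset.erase_ssubset hv)
      have htmem : ∀ w ∈ t, w ∈ s ∧ w ≠ v ∧ w ≠ g v := by
        intro w hw
        simp only [ht, Finset.mem_erase] at hw
        exact ⟨hw.2.2, hw.2.1, hw.1⟩
      have hmt : ∀ w ∈ t, g w ∈ t := by
        intro w hw
        obtain ⟨hws, hwv, hwgv⟩ := htmem w hw
        have hgws : g w ∈ s := hmem w hws
        have h1 : g w ≠ g v := fun h => hwv (by rw [← hinv w hws, h, hinv v hv])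
        have h2 : g w ≠ v := fun h => hwgv (by rw [← hinv w hws, h])
        simp only [ht, Finset.mem_erase]
        exact ⟨h1, h2, hgws⟩
      have heven : Even t.card :=
        ih t htsub (fun w hw => hmt w hw) (fun w hw => hinv w (htmem w hw).1)
          (fun w hw => hne w (htmem w hw).1)
      have hcard : s.card = t.card + 2 := by
        have h1 : (s.erase v).card = s.card - 1 := Finset.card_erase_of_mem hv
        have h2 : t.card = (s.erase v).card - 1 :=
          Finset.card_erase_of_mem (Finset.mem_erase.2 ⟨hne v hv, hgv⟩)
        have hpos : 1 ≤ s.card := Finset.card_pos.2 ⟨v, hv⟩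
        have hpos2 : 2 ≤ s.card := by
          have : ({v, g v} : Finset α) ⊆ s := by
            intro x hx; simp at hx; rcases hx with rfl | rfl <;> assumption
          calc 2 = ({v, g v} : Finset α).card := by
                  rw [Finset.card_insert_of_notMem (by simp [Ne.symm (hne v hv)]),
                    Finset.card_singleton]
               _ ≤ s.card := Finset.card_le_card this
        omega
      rw [hcard]
      exact heven.add (even_two)

/-- A finite connected cubic graph with a bridge admits no proper
3-edge-coloring. -/
theorem stmt_18 {V : Type*} [Fintype V] [DecidableEq V]
    (Γ : SimpleGraph V) [DecidableRel Γ.Adj]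
    (hconn : Γ.Connected)
    (hreg : ∀ v : V, Γ.degree v = 3)
    (ed : Sym2 V) (hbridge : Γ.IsBridge ed) :
    ¬ ∃ f : Sym2 V → Fin 3,
        ∀ (v : V) (e₁ e₂ : Sym2 V), e₁ ∈ Γ.incidenceSet v →
          e₂ ∈ Γ.incidenceSet v → e₁ ≠ e₂ → f e₁ ≠ f e₂ := by
  classical
  rintro ⟨f, hf⟩
  induction ed using Sym2.ind with
  | _ a b =>
  rw [SimpleGraph.isBridge_iff] at hbridge
  obtain ⟨hab, hnr⟩ : Γ.Adj a b ∧ _ :=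
    ⟨(SimpleGraph.isBridge_iff.2 hbridge).reachable_iff_adj.1 (hconn.preconnected a b), hbridge⟩
  set Γ' := Γ \ SimpleGraph.fromEdgeSet {s(a, b)} with hΓ'
  -- at each vertex and for each color there is a unique incident edge of that color
  have key : ∀ (v : V) (c : Fin 3), ∃! w : V, Γ.Adj v w ∧ f s(v, w) = c := by
    intro v c
    have hcard : (Γ.incidenceFinset v).card = 3 := by
      rw [Γ.card_incidenceFinset_eq_degree]; exact hreg v
    have hinj : Set.InjOn f (Γ.incidenceFinset v : Set (Sym2 V)) := by
      intro e₁ h₁ e₂ h₂ h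
      by_contra hne
      exact hf v e₁ e₂ (by simpa [SimpleGraph.mem_incidenceFinset] using h₁)
        (by simpa [SimpleGraph.mem_incidenceFinset] using h₂) hne h
    have himg : ((Γ.incidenceFinset v).image f).card = 3 := by
      rw [Finset.card_image_of_injOn hinj, hcard]
    have huniv : (Γ.incidenceFinset v).image f = Finset.univ := by
      apply Finset.eq_univ_of_card
      simp [himg]
    have hc : c ∈ (Γ.incidenceFinset v).image f := by rw [huniv]; exact Finset.mem_univ c
    obtain ⟨e, he, hfe⟩ := Finset.mem_image.1 hc
    rw [SimpleGraph.mem_incidenceFinset] at he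
    obtain ⟨hes, hve⟩ := he
    refine ⟨Sym2.Mem.other' hve, ?_, ?_⟩
    · have hspec : s(v, Sym2.Mem.other' hve) = e := Sym2.other_spec' hve
      constructor
      · rw [← SimpleGraph.mem_edgeSet, hspec]; exact hes
      · rw [hspec]; exact hfe
    · rintro w ⟨hadj, hfw⟩
      have h1 : s(v, w) ∈ Γ.incidenceSet v := (Γ.mem_incidenceSet v w).2 hadj
      have hspec : s(v, Sym2.Mem.other' hve) = e := Sym2.other_spec' hve
      have h2 : s(v, Sym2.Mem.other' hve) ∈ Γ.incidenceSet v := by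
        rw [hspec]; exact ⟨hes, hve⟩
      have heq : s(v, w) = s(v, Sym2.Mem.other' hve) := by
        by_contra hne
        exact hf v _ _ h1 h2 hne (by rw [hfw, hspec, hfe])
      exact (Sym2.congr_right.1 heq)
  -- the matching partner function for color c
  let g : Fin 3 → V → V := fun c v => (key v c).choose
  have hg_adj : ∀ c v, Γ.Adj v (g c v) := fun c v => (key v c).choose_spec.1.1
  have hg_col : ∀ c v, f s(v, g c v) = c := fun c v => (key v c).choose_spec.1.2
  have hg_uniq : ∀ c v w, Γ.Adj v w → f s(v, w) = c → w = g c v :=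
    fun c v w h1 h2 => (key v c).choose_spec.2 w ⟨h1, h2⟩
  have hg_inv : ∀ c v, g c (g c v) = v := by
    intro c v
    have := hg_uniq c (g c v) v (hg_adj c v).symm (by rw [Sym2.eq_swap]; exact hg_col c v)
    exact this.symm
  have hg_ne : ∀ c v, g c v ≠ v := fun c v h => Γ.irrefl (h ▸ hg_adj c v)
  -- the component of a in Γ'
  let S : Finset V := Finset.univ.filter (fun v => Γ'.Reachable a v)
  have haS : a ∈ S := by
    simp only [S, Finset.mem_filter, Finset.mem_univ, true_and]
    exact SimpleGraph.Reachable.refl a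
  have hbS : b ∉ S := by simp [S]; exact hnr
  have hS_closed : ∀ v ∈ S, ∀ w, Γ'.Adj v w → w ∈ S := by
    intro v hv w hadj
    simp only [S, Finset.mem_filter, Finset.mem_univ, true_and] at hv ⊢
    exact hv.trans hadj.reachable
  have hΓ'_adj : ∀ v w, Γ.Adj v w → s(v, w) ≠ s(a, b) → Γ'.Adj v w := by
    intro v w h1 h2
    rw [hΓ', SimpleGraph.sdiff_adj, SimpleGraph.fromEdgeSet_adj]
    exact ⟨h1, fun h => h2 h.1⟩
  set c₀ : Fin 3 := f s(a, b) with hc₀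
  -- color ≠ c₀ : S has even cardinality
  have heven : Even S.card := by
    refine even_card_of_involution S (g (c₀ + 1)) ?_ (fun v _ => hg_inv _ v)
      (fun v _ => hg_ne _ v)
    intro v hv
    refine hS_closed v hv _ (hΓ'_adj _ _ (hg_adj _ v) ?_)
    intro h
    have := hg_col (c₀ + 1) v
    rw [h, ← hc₀] at this
    simpa using this
  -- color c₀ : S minus a has even cardinality
  have hba : g c₀ a = b := (hg_uniq c₀ a b hab rfl).symm
  have hodd : Even (S.erase a).card := by
    refine even_card_of_involution (S.erase a) (g c₀) ?_ (fun v _ => hg_inv _ v)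
      (fun v _ => hg_ne _ v)
    intro v hv
    obtain ⟨hvne, hvS⟩ := Finset.mem_erase.1 hv
    have hedge : s(v, g c₀ v) ≠ s(a, b) := by
      intro h
      rw [Sym2.eq_iff] at h
      rcases h with ⟨h1, _⟩ | ⟨h1, _⟩
      · exact hvne h1
      · exact hbS (h1 ▸ hvS)
    have hgS : g c₀ v ∈ S := hS_closed v hvS _ (hΓ'_adj _ _ (hg_adj _ v) hedge)
    refine Finset.mem_erase.2 ⟨?_, hgS⟩
    intro h
    have : v = b := by rw [← hg_inv c₀ v, h, hba]
    exact hbS (this ▸ hvS)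
  have hcard : (S.erase a).card = S.card - 1 := Finset.card_erase_of_mem haS
  have hpos : 1 ≤ S.card := Finset.card_pos.2 ⟨a, haS⟩
  rw [hcard] at hodd
  rw [Nat.even_sub hpos] at hodd
  simp [heven] at hodd
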